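/- Let n be even, a > b, gcd(n, a−b) = 1, and let f : F₂ⁿ → F₂ⁿ be defined by f(x) = (Sᵃ(x) ∧ Sᵇ(x)) ⊕ Sᶜ(x). Let α = 1ⁿ and β ∈ F₂ⁿ, and set γ = β ⊕ Sᶜ(α). If wt(γ) ≡ 1 (mod 2), then the differential probability Pr(α →f β) = #{x ∈ F₂ⁿ : f(x) ⊕ f(x ⊕ α) = β} / 2ⁿ equals 0 (i.e., no x satisfies f(x) ⊕ f(x ⊕ α) = β). -/

import Mathlib

/-- Circular left shift by `t` bits: `(rotL n t x) i = x ((i + t) % n)`. -/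
def rotL (n t : ℕ) (x : Fin n → Bool) : Fin n → Bool :=
  fun i => x ⟨(i.val + t) % n, Nat.mod_lt _ i.pos⟩

/-- Hamming weight of an `n`-bit vector. -/
def hw {n : ℕ} (x : Fin n → Bool) : ℕ :=
  (Finset.univ.filter fun i => x i = true).card

/-- Differential probability `Pr(α →f β) = #{x : f(x) ⊕ f(x ⊕ α) = β} / 2^n`. -/
noncomputable def diffProb (n : ℕ) (f : (Fin n → Bool) → Fin n → Bool)
    (α β : Fin n → Bool) : ℚ :=
  ((Finset.univ.filter fun x : Fin n → Bool =>
      (fun i => xor (f x i) (f (fun j => xor (x j) (α j)) i)) = β).card : ℚ) / 2 ^ n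

/-- bool to `ZMod 2` -/
def b2 (u : Bool) : ZMod 2 := if u then 1 else 0

open Fin.NatCast in
lemma rot_sum (n t : ℕ) (hn : 0 < n) (x : Fin n → Bool) :
    ∑ i : Fin n, b2 (x ⟨(i.val + t) % n, Nat.mod_lt _ i.pos⟩) = ∑ j : Fin n, b2 (x j) := by
  haveI : NeZero n := ⟨hn.ne'⟩
  refine Fintype.sum_equiv (Equiv.addRight (t : Fin n)) _ _ ?_
  intro i
  have h : (⟨(i.val + t) % n, Nat.mod_lt _ i.pos⟩ : Fin n) = (Equiv.addRight (t : Fin n)) i := by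
    apply Fin.ext
    simp only [Equiv.coe_addRight, Fin.add_def, Fin.val_natCast]
    conv_lhs => rw [Nat.add_mod, Nat.mod_eq_of_lt i.isLt]
  rw [h]

theorem simon_diff_allones_odd (n a b c : ℕ) (hn : 0 < n) (hneven : Even n)
    (hab : a > b) (hgcd : Nat.gcd n (a - b) = 1)
    (f : (Fin n → Bool) → Fin n → Bool)
    (hf : ∀ x, f x = fun i => xor (rotL n a x i && rotL n b x i) (rotL n c x i))
    (α β γ : Fin n → Bool)
    (hα : α = fun _ => true)
    (hγ : γ = fun i => xor (β i) (rotL n c α i))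
    (hwt : hw γ % 2 = 1) :
    diffProb n f α β = 0 ∧
      ∀ x : Fin n → Bool,
        (fun i => xor (f x i) (f (fun j => xor (x j) (α j)) i)) ≠ β := by
  have key : ∀ x : Fin n → Bool,
      (fun i => xor (f x i) (f (fun j => xor (x j) (α j)) i)) ≠ β := by
    intro x heq
    have hbit : ∀ i : Fin n,
        γ i = !(xor (x ⟨(i.val + a) % n, Nat.mod_lt _ i.pos⟩)
                    (x ⟨(i.val + b) % n, Nat.mod_lt _ i.pos⟩)) := by
      intro i
      have h1 := congrFun heq i
      simp only [hf, hα, hγ, rotL] at h1 ⊢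
      rw [← h1]
      cases x ⟨(i.val + a) % n, Nat.mod_lt _ i.pos⟩ <;>
        cases x ⟨(i.val + b) % n, Nat.mod_lt _ i.pos⟩ <;>
          cases x ⟨(i.val + c) % n, Nat.mod_lt _ i.pos⟩ <;> rfl
    have hsum : (hw γ : ZMod 2) = ∑ i : Fin n, b2 (γ i) := by
      unfold hw
      rw [Finset.card_filter]
      push_cast
      apply Finset.sum_congr rfl
      intro i _
      by_cases h : γ i = true <;> simp [h, b2]
    have hone : (hw γ : ZMod 2) = 1 := by
      rw [← ZMod.natCast_mod, hwt, Nat.cast_one]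
    have hzero : ∑ i : Fin n, b2 (γ i) = 0 := by
      have hpt : ∀ i : Fin n, b2 (γ i)
          = 1 + b2 (x ⟨(i.val + a) % n, Nat.mod_lt _ i.pos⟩)
              + b2 (x ⟨(i.val + b) % n, Nat.mod_lt _ i.pos⟩) := by
        intro i
        rw [hbit i]
        cases x ⟨(i.val + a) % n, Nat.mod_lt _ i.pos⟩ <;>
          cases x ⟨(i.val + b) % n, Nat.mod_lt _ i.pos⟩ <;> rfl
      rw [Finset.sum_congr rfl fun i _ => hpt i]
      rw [Finset.sum_add_distrib, Finset.sum_add_distrib, Finset.sum_const]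
      rw [rot_sum n a hn x, rot_sum n b hn x]
      have hn2 : ((n : ℕ) : ZMod 2) = 0 := by
        have := (ZMod.natCast_eq_zero_iff n 2).mpr hneven.two_dvd
        exact this
      rw [Finset.card_univ, Fintype.card_fin, nsmul_eq_mul, mul_one, hn2, zero_add,
        ← two_mul, show (2 : ZMod 2) = 0 by decide, zero_mul]
    rw [hsum, hzero] at hone
    exact one_ne_zero hone.symm
  refine ⟨?_, key⟩
  unfold diffProb
  rw [Finset.filter_false_of_mem (fun x _ => key x), Finset.card_empty]
  simp
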